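/- Let r ≥ 2, 1 ≤ l_0 ≤ r-1, and let Ĉ_k^r (0 ≤ k ≤ l_0-1) be defined by the identity p_0^{l_0+r-1}(x_{i-1/2}) = ∑_{k=0}^{l_0-1} Ĉ_k^r · p_k^r(x_{i-1/2}) for Lagrange interpolation on the uniform-grid stencil {x_{i-r}, ..., x_{i+l_0-1}}, where p_k^r uses nodes {x_{i-r+k}, ..., x_{i+k}}. Then Ĉ_k^r > 0 for all 0 ≤ k ≤ l_0-1 and ∑_{k=0}^{l_0-1} Ĉ_k^r = 1. -/

import Mathlib

open Lagrange Polynomial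

/-- Midpoint value of the Lagrange interpolant on the stencil `{x_s, …, x_t}`. -/
noncomputable def QQ (a h : ℝ) (i s t : ℤ) (f : ℝ → ℝ) : ℝ :=
  (Lagrange.interpolate (Finset.Icc s t) (fun j : ℤ => a + (j : ℝ) * h)
    (fun j => f (a + (j : ℝ) * h))).eval (a + ((i : ℝ) - 1 / 2) * h)

lemma xinj (a h : ℝ) (hh : 0 < h) :
    Function.Injective (fun j : ℤ => a + (j : ℝ) * h) := by
  intro p q hpq
  simp only [add_right_injective] at hpq
  have h1 : (p : ℝ) * h = (q : ℝ) * h := by linarith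
  have h2 : (p : ℝ) = q := mul_right_cancel₀ (ne_of_gt hh) h1
  exact_mod_cast h2

lemma m_ne (a h : ℝ) (hh : 0 < h) (i j : ℤ) :
    a + ((i : ℝ) - 1 / 2) * h ≠ a + (j : ℝ) * h := by
  intro e
  have h1 : ((i : ℝ) - 1 / 2) * h = (j : ℝ) * h := by linarith
  have h2 : (i : ℝ) - 1 / 2 = j := mul_right_cancel₀ (ne_of_gt hh) h1
  have h3 : ((2 * i - 1 : ℤ) : ℝ) = ((2 * j : ℤ) : ℝ) := by push_cast; linarith
  have h4 : (2 * i - 1 : ℤ) = 2 * j := by exact_mod_cast h3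
  omega

lemma neville (a h : ℝ) (hh : 0 < h) (i : ℤ) (s t : ℤ) (hst : s < t) (f : ℝ → ℝ) :
    QQ a h i s t f
      = (((i : ℝ) - 1 / 2 - s) / ((t : ℝ) - s)) * QQ a h i (s + 1) t f
        + (((t : ℝ) - i + 1 / 2) / ((t : ℝ) - s)) * QQ a h i s (t - 1) f := by
  set x : ℤ → ℝ := fun j : ℤ => a + (j : ℝ) * h with hx
  set m : ℝ := a + ((i : ℝ) - 1 / 2) * h with hm
  have hvs : Set.InjOn x (Finset.Icc s t : Set ℤ) := (xinj a h hh).injOn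
  have hs : s ∈ Finset.Icc s t := by simp [Finset.mem_Icc]; omega
  have ht : t ∈ Finset.Icc s t := by simp [Finset.mem_Icc]; omega
  have key := Lagrange.interpolate_eq_add_interpolate_erase (r := fun j => f (x j))
    hvs hs ht (by omega)
  have e1 : (Finset.Icc s t).erase t = Finset.Icc s (t - 1) := by
    ext j; simp [Finset.mem_erase, Finset.mem_Icc]
  have e2 : (Finset.Icc s t).erase s = Finset.Icc (s + 1) t := by
    ext j; simp [Finset.mem_erase, Finset.mem_Icc]
  rw [e1, e2] at key
  have keval := congrArg (Polynomial.eval m) key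
  simp only [eval_add, eval_mul, basisDivisor, eval_C, eval_sub, eval_X] at keval
  have hQ : QQ a h i s t f
      = QQ a h i s (t - 1) f * ((x s - x t)⁻¹ * (m - x t))
        + QQ a h i (s + 1) t f * ((x t - x s)⁻¹ * (m - x s)) := keval
  have hts : (0 : ℝ) < (t : ℝ) - s := by
    have : (s : ℝ) < t := by exact_mod_cast hst
    linarith
  have hst' : x s - x t ≠ 0 := by
    have : x s ≠ x t := fun e => (by omega : s ≠ t) (xinj a h hh e)
    exact sub_ne_zero.mpr this
  have hts' : x t - x s ≠ 0 := by
    have : x t ≠ x s := fun e => (by omega : t ≠ s) (xinj a h hh e)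
    exact sub_ne_zero.mpr this
  have c1 : (x s - x t)⁻¹ * (m - x t) = ((t : ℝ) - i + 1 / 2) / ((t : ℝ) - s) := by
    have hx1 : x s - x t = ((s : ℝ) - t) * h := by simp [hx]; ring
    have hx2 : m - x t = ((i : ℝ) - 1 / 2 - t) * h := by simp [hx, hm]; ring
    rw [hx1, hx2]
    have h1 : ((s : ℝ) - t) ≠ 0 := by intro e; apply hst'; rw [hx1, e, zero_mul]
    field_simp
    ring
  have c2 : (x t - x s)⁻¹ * (m - x s) = ((i : ℝ) - 1 / 2 - s) / ((t : ℝ) - s) := by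
    have hx1 : x t - x s = ((t : ℝ) - s) * h := by simp [hx]; ring
    have hx2 : m - x s = ((i : ℝ) - 1 / 2 - s) * h := by simp [hx, hm]; ring
    rw [hx1, hx2]
    field_simp
  rw [hQ, c1, c2]; ring

lemma decomp (a h : ℝ) (hh : 0 < h) (i : ℤ) (r : ℕ) :
    ∀ n : ℕ, ∀ s t : ℤ, i - r ≤ s → t ≤ i + r - 1 → t - s = r + n →
      ∃ D : ℕ → ℝ, (∀ k, k ≤ n → 0 < D k) ∧ (∑ k ∈ Finset.range (n + 1), D k = 1) ∧
        ∀ f : ℝ → ℝ,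
          QQ a h i s t f = ∑ k ∈ Finset.range (n + 1), D k * QQ a h i (s + k) (s + k + r) f := by
  intro n
  induction n with
  | zero =>
    intro s t h1 h2 h3
    refine ⟨fun _ => 1, fun _ _ => one_pos, by simp, fun f => ?_⟩
    simp only [zero_add, Finset.sum_range_one, Nat.cast_zero, add_zero, one_mul]
    rw [show s + (r : ℤ) = t by omega]
  | succ n ih =>
    intro s t h1 h2 h3
    push_cast at h3
    have hst : s < t := by omega
    have hsle : s ≤ i - 1 := by omega
    have hti : i ≤ t := by omega
    obtain ⟨D1, p1, s1, e1⟩ := ih (s + 1) t (by omega) h2 (by omega)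
    obtain ⟨D2, p2, s2, e2⟩ := ih s (t - 1) h1 (by omega) (by omega)
    set α : ℝ := ((i : ℝ) - 1 / 2 - s) / ((t : ℝ) - s) with hαdef
    set β : ℝ := ((t : ℝ) - i + 1 / 2) / ((t : ℝ) - s) with hβdef
    have hts : (0 : ℝ) < (t : ℝ) - s := by
      have : (s : ℝ) < t := by exact_mod_cast hst
      linarith
    have hα : 0 < α := by
      apply div_pos _ hts
      have : (s : ℝ) ≤ (i : ℝ) - 1 := by exact_mod_cast hsle
      linarith
    have hβ : 0 < β := by
      apply div_pos _ hts
      have : (i : ℝ) ≤ (t : ℝ) := by exact_mod_cast hti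
      linarith
    have hαβ : α + β = 1 := by
      rw [hαdef, hβdef, ← add_div, div_eq_one_iff_eq (ne_of_gt hts)]
      ring
    refine ⟨fun k => α * (if 1 ≤ k then D1 (k - 1) else 0)
      + β * (if k ≤ n then D2 k else 0), ?_, ?_, ?_⟩
    · intro k hk
      show 0 < α * (if 1 ≤ k then D1 (k - 1) else 0) + β * (if k ≤ n then D2 k else 0)
      rcases Nat.eq_zero_or_pos k with rfl | hk1
      · simpa using mul_pos hβ (p2 0 (Nat.zero_le n))
      · by_cases hkn : k ≤ n
        · rw [if_pos (by omega : 1 ≤ k), if_pos hkn]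
          exact add_pos (mul_pos hα (p1 (k - 1) (by omega))) (mul_pos hβ (p2 k hkn))
        · have hk2 : k = n + 1 := by omega
          subst hk2
          rw [if_pos (by omega : 1 ≤ n + 1), if_neg hkn, mul_zero, add_zero]
          exact mul_pos hα (p1 n (by omega))
    · rw [Finset.sum_add_distrib, ← Finset.mul_sum, ← Finset.mul_sum]
      have A : ∑ k ∈ Finset.range (n + 1 + 1), (if 1 ≤ k then D1 (k - 1) else 0) = 1 := by
        rw [Finset.sum_range_succ']
        simpa using s1
      have B : ∑ k ∈ Finset.range (n + 1 + 1), (if k ≤ n then D2 k else 0) = 1 := by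
        rw [Finset.sum_range_succ, if_neg (by omega)]
        rw [Finset.sum_congr rfl (fun k hk => if_pos (by
          simp only [Finset.mem_range] at hk; omega))]
        simpa using s2
      rw [A, B, mul_one, mul_one, hαβ]
    · intro f
      rw [neville a h hh i s t hst f, e1 f, e2 f]
      have E1 : ∑ k ∈ Finset.range (n + 1 + 1),
          (α * (if 1 ≤ k then D1 (k - 1) else 0)) * QQ a h i (s + k) (s + k + r) f
          = α * ∑ k ∈ Finset.range (n + 1), D1 k * QQ a h i (s + 1 + k) (s + 1 + k + r) f := by
        rw [Finset.sum_range_succ', Finset.mul_sum]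
        rw [if_neg (by omega : ¬ (1 : ℕ) ≤ 0), mul_zero, zero_mul, add_zero]
        refine Finset.sum_congr rfl fun k _ => ?_
        rw [if_pos (by omega : 1 ≤ k + 1), Nat.add_sub_cancel]
        push_cast
        rw [show s + ((k : ℤ) + 1) = s + 1 + (k : ℤ) by ring]
        ring
      have E2 : ∑ k ∈ Finset.range (n + 1 + 1),
          (β * (if k ≤ n then D2 k else 0)) * QQ a h i (s + k) (s + k + r) f
          = β * ∑ k ∈ Finset.range (n + 1), D2 k * QQ a h i (s + k) (s + k + r) f := by
        rw [Finset.sum_range_succ, if_neg (by omega), mul_zero, zero_mul, add_zero,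
          Finset.mul_sum]
        refine Finset.sum_congr rfl fun k hk => ?_
        simp only [Finset.mem_range] at hk
        rw [if_pos (by omega)]
        ring
      rw [← E1, ← E2, ← Finset.sum_add_distrib]
      refine Finset.sum_congr rfl fun k _ => ?_
      ring

lemma QQ_delta (a h : ℝ) (hh : 0 < h) (i : ℤ) (s t p : ℤ) :
    QQ a h i s t (fun y => if y = a + (p : ℝ) * h then 1 else 0)
      = if p ∈ Finset.Icc s t then
          (Lagrange.basis (Finset.Icc s t) (fun j : ℤ => a + (j : ℝ) * h) p).eval
            (a + ((i : ℝ) - 1 / 2) * h)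
        else 0 := by
  unfold QQ
  have hv : (fun j : ℤ => (fun y => if y = a + (p : ℝ) * h then (1 : ℝ) else 0)
      (a + (j : ℝ) * h)) = fun j : ℤ => if j = p then (1 : ℝ) else 0 := by
    funext j
    show (if a + (j : ℝ) * h = a + (p : ℝ) * h then (1 : ℝ) else 0)
      = if j = p then (1 : ℝ) else 0
    by_cases hj : j = p
    · subst hj; simp
    · rw [if_neg fun e => hj (xinj a h hh e), if_neg hj]
  rw [hv, Lagrange.interpolate_apply]
  by_cases hp : p ∈ Finset.Icc s t
  · rw [if_pos hp, Finset.sum_eq_single p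
      (fun b _ hb => by rw [if_neg hb, map_zero, zero_mul])
      (fun hnp => absurd hp hnp)]
    simp
  · rw [if_neg hp, Finset.sum_eq_zero fun b hb => by
      rw [if_neg (by rintro rfl; exact hp hb), map_zero, zero_mul]]
    simp

lemma basis_eval_ne (a h : ℝ) (hh : 0 < h) (i : ℤ) (s : Finset ℤ) (p : ℤ) :
    (Lagrange.basis s (fun j : ℤ => a + (j : ℝ) * h) p).eval
      (a + ((i : ℝ) - 1 / 2) * h) ≠ 0 := by
  unfold Lagrange.basis
  rw [eval_prod]
  apply Finset.prod_ne_zero_iff.mpr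
  intro j hj
  have hjp : j ≠ p := (Finset.mem_erase.mp hj).1
  simp only [basisDivisor, eval_mul, eval_C, eval_sub, eval_X]
  apply mul_ne_zero
  · apply inv_ne_zero
    exact sub_ne_zero.mpr fun e => hjp.symm (xinj a h hh e)
  · exact sub_ne_zero.mpr (m_ne a h hh i j)

/-- The coefficients `Ĉ_k^r` expressing the midpoint value of the Lagrange interpolant
of degree `l₀ + r - 1` on the stencil `{x_{i-r}, …, x_{i+l₀-1}}` (uniform grid
`x_j = a + j h`) as a combination of the midpoint values of the degree-`r` interpolants
`p_k^r` on `{x_{i-r+k}, …, x_{i+k}}`, for every `f`, are positive and sum to one. -/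
theorem hatC_pos_sum_one (r l0 : ℕ) (hr : 2 ≤ r) (hl0 : 1 ≤ l0) (hl0r : l0 ≤ r - 1)
    (a h : ℝ) (hh : 0 < h) (i : ℤ) (Ch : ℕ → ℝ)
    (hCh : ∀ f : ℝ → ℝ,
      let x : ℤ → ℝ := fun j => a + (j : ℝ) * h
      let m : ℝ := a + ((i : ℝ) - 1 / 2) * h
      (Lagrange.interpolate (Finset.Icc (i - r) (i + l0 - 1)) x (fun j => f (x j))).eval m
        = ∑ k ∈ Finset.range l0, Ch k *
            (Lagrange.interpolate (Finset.Icc (i - r + k) (i + k)) x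
              (fun j => f (x j))).eval m) :
    (∀ k, k < l0 → 0 < Ch k) ∧ ∑ k ∈ Finset.range l0, Ch k = 1 := by
  have hCh' : ∀ f : ℝ → ℝ, QQ a h i (i - r) (i + l0 - 1) f
      = ∑ k ∈ Finset.range l0, Ch k * QQ a h i (i - r + k) (i + k) f := fun f => hCh f
  obtain ⟨D, hDpos, hDsum, hDe⟩ := decomp a h hh i r (l0 - 1) (i - r) (i + l0 - 1)
    (le_refl _) (by omega) (by push_cast [Nat.cast_sub hl0]; omega)
  rw [Nat.sub_add_cancel hl0] at hDsum hDe
  have hDe' : ∀ f : ℝ → ℝ, QQ a h i (i - r) (i + l0 - 1) f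
      = ∑ k ∈ Finset.range l0, D k * QQ a h i (i - r + k) (i + k) f := by
    intro f
    rw [hDe f]
    refine Finset.sum_congr rfl fun k _ => ?_
    rw [show i - (r : ℤ) + k + r = i + k by ring]
  have hzero : ∀ f : ℝ → ℝ,
      ∑ k ∈ Finset.range l0, (Ch k - D k) * QQ a h i (i - r + k) (i + k) f = 0 := by
    intro f
    have := (hCh' f).symm.trans (hDe' f)
    simp only [sub_mul, Finset.sum_sub_distrib]
    linarith [this]
  have key : ∀ j : ℕ, j < l0 → (∀ k, j < k → k < l0 → Ch k - D k = 0) → Ch j - D j = 0 := by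
    intro j hj hlater
    have hz := hzero (fun y => if y = a + ((i + (j : ℤ) : ℤ) : ℝ) * h then 1 else 0)
    rw [Finset.sum_eq_single j (fun b hb hbj => ?_) (fun hnj => absurd
      (Finset.mem_range.mpr hj) hnj)] at hz
    · rw [QQ_delta a h hh, if_pos (by simp only [Finset.mem_Icc]; omega)] at hz
      exact (mul_eq_zero.mp hz).resolve_right (basis_eval_ne a h hh i _ _)
    · simp only [Finset.mem_range] at hb
      rcases lt_or_gt_of_ne hbj with hlt | hgt
      · rw [QQ_delta a h hh, if_neg (by simp only [Finset.mem_Icc]; omega), mul_zero]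
      · rw [hlater b hgt hb, zero_mul]
  have hall : ∀ d : ℕ, ∀ j : ℕ, j < l0 → l0 ≤ j + d + 1 → Ch j - D j = 0 := by
    intro d
    induction d with
    | zero => intro j hj hj2; exact key j hj fun k hk1 hk2 => absurd hk2 (by omega)
    | succ d ih => intro j hj hj2; exact key j hj fun k hk1 hk2 => ih k hk2 (by omega)
  have heq : ∀ j, j < l0 → Ch j = D j := fun j hj => by
    have := hall (l0 - j) j hj (by omega)
    linarith
  constructor
  · intro k hk
    rw [heq k hk]
    exact hDpos k (by omega)
  · rw [Finset.sum_congr rfl fun k hk => heq k (Finset.mem_range.mp hk)]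
    exact hDsum
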